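/- arXiv:1508.02487 — 4 statements merged into one kernel-verified Lean document; each statement's English description precedes it below -/
import Mathlib

section
/- The matrix A_d, viewed as a complex matrix, has an eigenvalue λ with strictly positive real part; hence the linear system ẋ = A_d x (the open-loop lateral/directional dynamics of the damaged aircraft) is not stable. -/
open Matrix

/-- The damaged-aircraft lateral/directional state matrix. -/
def Ad : Matrix (Fin 4) (Fin 4) ℝ :=
  !![0, 1, 0, 0;
     0, -0.8566, -2.7681, 0.1008;
     0.0478, 0, 0, -1;
     0, -0.0248, 0, 0]

/-- Monic real quadratic with negative linear coefficient has a complex root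
with positive real part. -/
lemma quad_root (b c : ℝ) (hb : b < 0) :
    ∃ lam : ℂ, 0 < lam.re ∧ lam ^ 2 + (b : ℂ) * lam + (c : ℂ) = 0 := by
  rcases le_or_gt 0 (b ^ 2 - 4 * c) with h | h
  · set s := Real.sqrt (b ^ 2 - 4 * c) with hs
    have hs2 : s ^ 2 = b ^ 2 - 4 * c := Real.sq_sqrt h
    have hsn : 0 ≤ s := Real.sqrt_nonneg _
    refine ⟨(((-b + s) / 2 : ℝ) : ℂ), by simp; nlinarith, ?_⟩
    have hr : ((-b + s) / 2) ^ 2 + b * ((-b + s) / 2) + c = 0 := by nlinarith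
    exact_mod_cast congrArg (Complex.ofReal) hr
  · set s := Real.sqrt (4 * c - b ^ 2) with hs
    have hs2 : s ^ 2 = 4 * c - b ^ 2 := Real.sq_sqrt (by linarith)
    refine ⟨(( -b / 2 : ℝ) : ℂ) + (s / 2 : ℝ) * Complex.I, by simp; linarith, ?_⟩
    have hs2' : ((s : ℂ)) ^ 2 = 4 * (c : ℂ) - (b : ℂ) ^ 2 := by exact_mod_cast hs2
    push_cast
    linear_combination ((s:ℂ)^2/4) * Complex.I_sq - (1/4) * hs2'

/-- `Ad`, viewed as a complex matrix, has an eigenvalue with strictly positive real part;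
hence the open-loop lateral/directional dynamics `ẋ = Ad x` of the damaged aircraft
are not stable. -/
theorem Ad_has_unstable_eigenvalue :
    ∃ lam : ℂ, 0 < lam.re ∧
      ∃ x : Fin 4 → ℂ, x ≠ 0 ∧ (Ad.map (Complex.ofReal)).mulVec x = lam • x := by
  -- cubic factor of the characteristic polynomial
  set g : ℝ → ℝ := fun t => t ^ 3 + 4283 / 5000 * t ^ 2 + 1953 / 781250 * t
      + 10048203 / 50000000 with hg
  have hcont : ContinuousOn g (Set.Icc (-2 : ℝ) (-1)) := by fun_prop
  have hsub := intermediate_value_Ioo (by norm_num : (-2 : ℝ) ≤ -1) hcont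
  have h0 : (0 : ℝ) ∈ Set.Ioo (g (-2)) (g (-1)) := by
    simp only [hg]; norm_num
  obtain ⟨r, hrmem, hgr⟩ := hsub h0
  have hr1 : r < -1 := hrmem.2
  have hgr' : r ^ 3 + 4283 / 5000 * r ^ 2 + 1953 / 781250 * r + 10048203 / 50000000 = 0 := hgr
  obtain ⟨lam, hre, hquad⟩ := quad_root (r + 4283 / 5000)
      (1953 / 781250 + 4283 / 5000 * r + r ^ 2) (by norm_num; linarith)
  refine ⟨lam, hre, ?_⟩
  -- lam is a root of the cubic, hence of the characteristic polynomial
  have hgrC : (r : ℂ) ^ 3 + 4283 / 5000 * (r : ℂ) ^ 2 + 1953 / 781250 * (r : ℂ)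
      + 10048203 / 50000000 = 0 := by
    have h := congrArg Complex.ofReal hgr'
    push_cast at h
    exact h
  have hcube : lam ^ 3 + 4283 / 5000 * lam ^ 2 + 1953 / 781250 * lam
      + 10048203 / 50000000 = 0 := by
    push_cast at hquad
    linear_combination (lam - (r : ℂ)) * hquad + hgrC
  have hM : lam • (1 : Matrix (Fin 4) (Fin 4) ℂ) - Ad.map (Complex.ofReal) =
      !![lam, -1, 0, 0;
         0, lam + 4283/5000, 27681/10000, -63/625;
         -239/5000, 0, lam, 1;
         0, 31/1250, 0, lam] := by
    ext i j
    fin_cases i <;> fin_cases j <;>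
      simp [Ad, Matrix.one_apply, Matrix.vecHead, Matrix.vecTail] <;> norm_num
  have hdet : (lam • 1 - Ad.map (Complex.ofReal)).det = 0 := by
    rw [hM]
    simp [Matrix.det_succ_row_zero, Fin.sum_univ_succ, Fin.succAbove]
    ring_nf
    linear_combination lam * hcube
  obtain ⟨x, hx0, hxv⟩ := (Matrix.exists_mulVec_eq_zero_iff).mpr hdet
  refine ⟨x, hx0, ?_⟩
  rw [Matrix.sub_mulVec, Matrix.smul_mulVec, Matrix.one_mulVec, sub_eq_zero] at hxv
  exact hxv.symm
end

section
/- The matrix A_d has a pair of non-real complex conjugate eigenvalues λ and conj(λ) (the Dutch-roll mode) satisfying Re(λ) ∈ (0.08, 0.10) and |λ| ∈ (0.43, 0.45); in particular the Dutch-roll mode of the damaged aircraft is unstable. -/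
open Matrix

lemma Ad_eigvec (μ : ℂ) (hμ : μ ≠ 0)
    (hc : μ^3 + 0.8566*μ^2 + 0.00249984*μ + 0.20096406 = 0) :
    ∃ x : Fin 4 → ℂ, x ≠ 0 ∧ (Ad.map (Complex.ofReal)).mulVec x = μ • x := by
  refine ⟨![μ^2, μ^3, 0.0726*μ, -0.0248*μ^2], ?_, ?_⟩
  · intro h
    have h0 := congrFun h 0
    simp at h0
    exact hμ h0
  · funext i
    fin_cases i <;>
      norm_num [Ad, mulVec, dotProduct, Fin.sum_univ_four, Complex.ofReal_div, Matrix.cons_val_two, Matrix.cons_val_three,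
        Matrix.vecHead, Matrix.vecTail]
    all_goals first
      | linear_combination (-μ) * hc
      | linear_combination μ * hc
      | ring

/-- The cubic factor of the characteristic polynomial has a real root in
`(-1.041, -1.039)`. -/
lemma cubic_real_root :
    ∃ r : ℝ, r ∈ Set.Ioo (-1.041 : ℝ) (-1.039 : ℝ) ∧
      r^3 + 0.8566*r^2 + 0.00249984*r + 0.20096406 = 0 := by
  have hf : ContinuousOn (fun x : ℝ => x^3 + 0.8566*x^2 + 0.00249984*x + 0.20096406)
      (Set.Icc (-1.041 : ℝ) (-1.039 : ℝ)) := by fun_prop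
  have h := intermediate_value_Ioo (by norm_num : (-1.041 : ℝ) ≤ -1.039) hf
  have h0 : (0 : ℝ) ∈ Set.Ioo ((-1.041:ℝ)^3 + 0.8566*(-1.041)^2 + 0.00249984*(-1.041) + 0.20096406)
      ((-1.039:ℝ)^3 + 0.8566*(-1.039)^2 + 0.00249984*(-1.039) + 0.20096406) := by
    constructor <;> norm_num
  obtain ⟨r, hr, hr0⟩ := h h0
  exact ⟨r, hr, hr0⟩

set_option maxHeartbeats 2000000 in
/-- `Ad` has a pair of non-real complex-conjugate eigenvalues `lam` and `conj lam`
(the Dutch-roll mode) with `Re lam ∈ (0.08, 0.10)` and `|lam| ∈ (0.43, 0.45)`;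
in particular the Dutch-roll mode of the damaged aircraft is unstable. -/
theorem Ad_dutch_roll_eigenvalues :
    ∃ lam : ℂ, lam.im ≠ 0 ∧
      lam.re ∈ Set.Ioo (0.08 : ℝ) (0.10 : ℝ) ∧
      ‖lam‖ ∈ Set.Ioo (0.43 : ℝ) (0.45 : ℝ) ∧
      (∃ x : Fin 4 → ℂ, x ≠ 0 ∧ (Ad.map (Complex.ofReal)).mulVec x = lam • x) ∧
      (∃ y : Fin 4 → ℂ, y ≠ 0 ∧
        (Ad.map (Complex.ofReal)).mulVec y = (starRingEnd ℂ) lam • y) := by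
  obtain ⟨r, ⟨hr1, hr2⟩, hr0⟩ := cubic_real_root
  obtain ⟨a, ha⟩ : ∃ a : ℝ, a = -(0.8566 + r)/2 := ⟨_, rfl⟩
  obtain ⟨m, hm⟩ : ∃ m : ℝ, m = 0.00249984 + r*(0.8566 + r) := ⟨_, rfl⟩
  have hm_lb : (0.1849 : ℝ) < m := by rw [hm]; nlinarith
  have hm_ub : m < (0.2025 : ℝ) := by rw [hm]; nlinarith
  have ha_lb : (0.08 : ℝ) < a := by rw [ha]; linarith
  have ha_ub : a < (0.10 : ℝ) := by rw [ha]; linarith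
  have hpos : (0 : ℝ) < m - a^2 := by
    have h1 : a^2 < 0.01 := by
      nlinarith [mul_pos (by linarith : (0:ℝ) < 0.1 - a) (by linarith : (0:ℝ) < 0.1 + a)]
    linarith
  obtain ⟨b, hb⟩ : ∃ b : ℝ, b = Real.sqrt (m - a^2) := ⟨_, rfl⟩
  have hb0 : 0 < b := hb ▸ Real.sqrt_pos.mpr hpos
  have hb2 : b^2 = m - a^2 := hb ▸ Real.sq_sqrt hpos.le
  obtain ⟨lam, hlam⟩ : ∃ l : ℂ, l = ⟨a, b⟩ := ⟨_, rfl⟩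
  have hre : lam.re = a := by rw [hlam]
  have him : lam.im = b := by rw [hlam]
  -- lam satisfies the quadratic factor
  have hquad : lam^2 - 2*(a:ℂ)*lam + (m:ℂ) = 0 := by
    apply Complex.ext <;>
      simp [hlam, pow_two, Complex.mul_re, Complex.mul_im, Complex.ofReal_re,
        Complex.ofReal_im]
    · nlinarith [hb2]
    · ring
  -- hence lam satisfies the cubic
  have hrC : (r:ℂ)^3 + 0.8566*(r:ℂ)^2 + 0.00249984*(r:ℂ) + 0.20096406 = 0 := by
    have := congrArg (Complex.ofReal) hr0
    push_cast at this
    norm_num at this ⊢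
    linear_combination this
  have haC : 2*(a:ℂ) + 0.8566 + (r:ℂ) = 0 := by
    rw [ha]; push_cast; norm_num; try ring
  have hmC : (m:ℂ) - (0.00249984 + (r:ℂ)*(0.8566 + (r:ℂ))) = 0 := by
    rw [hm]; push_cast; norm_num; try ring
  have hcub : lam^3 + 0.8566*lam^2 + 0.00249984*lam + 0.20096406 = 0 := by
    linear_combination (norm := (push_cast; norm_num; ring1)) (lam - (r:ℂ)) * hquad + hrC
      + (lam^2 - (r:ℂ)*lam) * haC - (lam - (r:ℂ)) * hmC
  have hlam0 : lam ≠ 0 := by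
    intro h
    have : lam.im = 0 := by rw [h]; rfl
    rw [him] at this; linarith
  have hcubc : (starRingEnd ℂ lam)^3 + 0.8566*(starRingEnd ℂ lam)^2
      + 0.00249984*(starRingEnd ℂ lam) + 0.20096406 = 0 := by
    have := congrArg (starRingEnd ℂ) hcub
    norm_num [map_div₀, map_ofNat] at this
    linear_combination this
  have hlamc0 : starRingEnd ℂ lam ≠ 0 := by simpa using hlam0
  have habs : ‖lam‖ = Real.sqrt m := by
    rw [hlam, Complex.norm_def, Complex.normSq_mk]
    congr 1
    nlinarith [hb2]
  refine ⟨lam, ?_, ⟨?_, ?_⟩, ⟨?_, ?_⟩, Ad_eigvec lam hlam0 hcub,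
    Ad_eigvec _ hlamc0 hcubc⟩
  · rw [him]; linarith
  · rw [hre]; exact ha_lb
  · rw [hre]; exact ha_ub
  · rw [habs]
    have h43 : (0.43 : ℝ) = Real.sqrt (0.1849) := by
      rw [show (0.1849:ℝ) = 0.43^2 by norm_num, Real.sqrt_sq (by norm_num)]
    rw [h43]
    exact Real.sqrt_lt_sqrt (by norm_num) hm_lb
  · rw [habs]
    have h45 : (0.45 : ℝ) = Real.sqrt (0.2025) := by
      rw [show (0.2025:ℝ) = 0.45^2 by norm_num, Real.sqrt_sq (by norm_num)]
    rw [h45]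
    exact Real.sqrt_lt_sqrt (by positivity) hm_ub
end

section
/- There exists an initial state x₀ ∈ ℝ⁴ such that the solution t ↦ exp(t·A_d)·x₀ of the open-loop system ẋ = A_d x is unbounded as t → ∞ (the damaged aircraft's open-loop response diverges). -/
open Matrix

lemma Ad_cubic_real_root :
    ∃ r : ℝ, r ≤ -1 ∧ r ^ 3 + 0.8566 * r ^ 2 + 0.00249984 * r + 0.20096406 = 0 := by
  have hcont : Continuous fun x : ℝ =>
      x ^ 3 + 0.8566 * x ^ 2 + 0.00249984 * x + 0.20096406 := by continuity
  have h := intermediate_value_Icc (by norm_num : (-2 : ℝ) ≤ -1) hcont.continuousOn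
  have h0 : (0 : ℝ) ∈ Set.Icc
      ((-2 : ℝ) ^ 3 + 0.8566 * (-2 : ℝ) ^ 2 + 0.00249984 * (-2 : ℝ) + 0.20096406)
      ((-1 : ℝ) ^ 3 + 0.8566 * (-1 : ℝ) ^ 2 + 0.00249984 * (-1 : ℝ) + 0.20096406) := by
    constructor <;> norm_num
  obtain ⟨r, hrmem, hr⟩ := h h0
  exact ⟨r, hrmem.2, hr⟩

lemma Ad_eig : ∃ l : ℂ, 0 < l.re ∧ ∃ v : Fin 4 → ℂ, v ≠ 0 ∧
    (Ad.map Complex.ofReal).mulVec v = l • v := by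
  obtain ⟨r, hrle, hr⟩ := Ad_cubic_real_root
  have hr' : (r : ℂ) ^ 3 + 0.8566 * (r : ℂ) ^ 2 + 0.00249984 * (r : ℂ) + 0.20096406 = 0 := by
    have h2 := congrArg (Complex.ofReal) hr
    push_cast at h2
    norm_num at h2 ⊢
    linear_combination h2
  set B : ℂ := 0.8566 + (r : ℂ) with hB
  set Cc : ℂ := 0.00249984 + 0.8566 * (r : ℂ) + (r : ℂ) ^ 2 with hCc
  have key : ∀ l : ℂ, 0 < l.re → l ^ 2 + B * l + Cc = 0 →
      ∃ l' : ℂ, 0 < l'.re ∧ ∃ v : Fin 4 → ℂ, v ≠ 0 ∧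
        (Ad.map Complex.ofReal).mulVec v = l' • v := by
    intro l hlre hlq
    have hq : l ^ 3 + 0.8566 * l ^ 2 + 0.00249984 * l + 0.20096406 = 0 := by
      rw [hB, hCc] at hlq
      linear_combination (l - (r : ℂ)) * hlq + hr'
    set w : ℂ := -(l ^ 2 + 0.8566 * l + 0.00249984) / 2.7681 with hwdef
    have hw : (-2.7681 : ℂ) * w = l ^ 2 + 0.8566 * l + 0.00249984 := by
      rw [hwdef]; field_simp
    refine ⟨l, hlre, ![1, l, w, -0.0248], ?_, ?_⟩
    · intro hcon
      have h3 := congrFun hcon 0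
      simp at h3
    · funext i
      fin_cases i
      · simp [Ad, Matrix.mulVec, dotProduct, Fin.sum_univ_four, Matrix.map_apply]
      · simp [Ad, Matrix.mulVec, dotProduct, Fin.sum_univ_four, Matrix.map_apply]
        norm_num
        linear_combination hw
      · simp [Ad, Matrix.mulVec, dotProduct, Fin.sum_univ_four, Matrix.map_apply]
        norm_num
        linear_combination (l / 2.7681) * hw + (1 / 2.7681) * hq
      · simp [Ad, Matrix.mulVec, dotProduct, Fin.sum_univ_four, Matrix.map_apply]
        norm_num
        ring
  have hex : ∃ z : ℂ, z ^ 2 + B * z + Cc = 0 := by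
    have hdeg : (Polynomial.X ^ 2 + Polynomial.C B * Polynomial.X + Polynomial.C Cc :
        Polynomial ℂ).degree = 2 := by
      have hrw : Polynomial.X ^ 2 + Polynomial.C B * Polynomial.X + Polynomial.C Cc =
          Polynomial.C (1 : ℂ) * Polynomial.X ^ 2 + Polynomial.C B * Polynomial.X +
            Polynomial.C Cc := by
        rw [Polynomial.C_1, one_mul]
      rw [hrw]
      exact Polynomial.degree_quadratic one_ne_zero
    obtain ⟨z, hz⟩ := Complex.exists_root
      (f := Polynomial.X ^ 2 + Polynomial.C B * Polynomial.X + Polynomial.C Cc)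
      (by rw [hdeg]; norm_num)
    exact ⟨z, by simpa [Polynomial.IsRoot] using hz⟩
  obtain ⟨μ, hμ⟩ := hex
  have hμ2 : (-B - μ) ^ 2 + B * (-B - μ) + Cc = 0 := by linear_combination hμ
  have hBre : B.re = 0.8566 + r := by
    rw [hB]
    have h6 : (0.8566 : ℂ) = ((0.8566 : ℝ) : ℂ) := by norm_num
    rw [h6, ← Complex.ofReal_add, Complex.ofReal_re]
  have hsum : μ.re + (-B - μ).re = -(0.8566 + r) := by
    rw [Complex.sub_re, Complex.neg_re, hBre]
    ring
  by_cases hpos : 0 < μ.re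
  · exact key μ hpos hμ
  · refine key (-B - μ) ?_ hμ2
    push_neg at hpos
    have h5 : (0.1434 : ℝ) ≤ -(0.8566 + r) := by norm_num; linarith
    linarith

/-- Eigenvector property passes to the matrix exponential. -/
lemma exp_mulVec_eigen (M : Matrix (Fin 4) (Fin 4) ℂ) (v : Fin 4 → ℂ) (l : ℂ)
    (h : M.mulVec v = l • v) :
    (NormedSpace.exp M).mulVec v = Complex.exp l • v := by
  letI : SeminormedRing (Matrix (Fin 4) (Fin 4) ℂ) := Matrix.linftyOpSemiNormedRing
  letI : NormedRing (Matrix (Fin 4) (Fin 4) ℂ) := Matrix.linftyOpNormedRing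
  letI : NormedAlgebra ℂ (Matrix (Fin 4) (Fin 4) ℂ) := Matrix.linftyOpNormedAlgebra
  have hpow : ∀ n : ℕ, (M ^ n).mulVec v = l ^ n • v := by
    intro n
    induction n with
    | zero => simp
    | succ n ih =>
      rw [pow_succ', ← Matrix.mulVec_mulVec, ih, Matrix.mulVec_smul, h, smul_smul, ← pow_succ]
  let f : Matrix (Fin 4) (Fin 4) ℂ →ₗ[ℂ] (Fin 4 → ℂ) :=
    { toFun := fun N => N.mulVec v
      map_add' := fun a b => Matrix.add_mulVec a b v
      map_smul' := fun c N => Matrix.smul_mulVec c N v }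
  have hc : Continuous f := f.continuous_of_finiteDimensional
  let φ : Matrix (Fin 4) (Fin 4) ℂ →L[ℂ] (Fin 4 → ℂ) := ⟨f, hc⟩
  have h1 : HasSum (fun n : ℕ => ((n.factorial⁻¹ : ℂ) • M ^ n).mulVec v)
      ((NormedSpace.exp M).mulVec v) :=
    φ.hasSum (NormedSpace.exp_series_hasSum_exp' (𝕂 := ℂ) M)
  have h2 : HasSum (fun n : ℕ => ((n.factorial⁻¹ : ℂ) * l ^ n) • v) (Complex.exp l • v) := by
    have := ((NormedSpace.exp_series_hasSum_exp' (𝕂 := ℂ) l)).smul_const v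
    rw [Complex.exp_eq_exp_ℂ]
    simpa [smul_eq_mul] using this
  have heq : (fun n : ℕ => ((n.factorial⁻¹ : ℂ) • M ^ n).mulVec v)
      = fun n : ℕ => ((n.factorial⁻¹ : ℂ) * l ^ n) • v := by
    funext n
    rw [Matrix.smul_mulVec, hpow, smul_smul]
  rw [heq] at h1
  exact h1.unique h2

/-- The real matrix exponential complexifies. -/
lemma exp_map_ofReal (t : ℝ) :
    (NormedSpace.exp (t • Ad)).map Complex.ofReal
      = NormedSpace.exp ((t : ℂ) • Ad.map Complex.ofReal) := by
  letI : SeminormedRing (Matrix (Fin 4) (Fin 4) ℝ) := Matrix.linftyOpSemiNormedRing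
  letI : NormedRing (Matrix (Fin 4) (Fin 4) ℝ) := Matrix.linftyOpNormedRing
  letI : NormedAlgebra ℝ (Matrix (Fin 4) (Fin 4) ℝ) := Matrix.linftyOpNormedAlgebra
  letI : SeminormedRing (Matrix (Fin 4) (Fin 4) ℂ) := Matrix.linftyOpSemiNormedRing
  letI : NormedRing (Matrix (Fin 4) (Fin 4) ℂ) := Matrix.linftyOpNormedRing
  letI : NormedAlgebra ℝ (Matrix (Fin 4) (Fin 4) ℂ) := Matrix.linftyOpNormedAlgebra
  letI : NormedAlgebra ℂ (Matrix (Fin 4) (Fin 4) ℂ) := Matrix.linftyOpNormedAlgebra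
  letI : NormedAlgebra ℚ (Matrix (Fin 4) (Fin 4) ℝ) := Matrix.linftyOpNormedAlgebra
  have hcont : Continuous
      (⇑(Complex.ofRealHom.mapMatrix : Matrix (Fin 4) (Fin 4) ℝ →+* Matrix (Fin 4) (Fin 4) ℂ)) := by
    have : (⇑(Complex.ofRealHom.mapMatrix :
        Matrix (Fin 4) (Fin 4) ℝ →+* Matrix (Fin 4) (Fin 4) ℂ))
        = fun M : Matrix (Fin 4) (Fin 4) ℝ => M.map Complex.ofReal := rfl
    rw [this]
    exact continuous_id.matrix_map Complex.continuous_ofReal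
  have h := NormedSpace.map_exp
    (Complex.ofRealHom.mapMatrix : Matrix (Fin 4) (Fin 4) ℝ →+* Matrix (Fin 4) (Fin 4) ℂ)
    hcont (t • Ad)
  have hmap : (Complex.ofRealHom.mapMatrix (t • Ad) : Matrix (Fin 4) (Fin 4) ℂ)
      = (t : ℂ) • Ad.map Complex.ofReal := by
    ext i j
    simp [RingHom.mapMatrix_apply, Matrix.map_apply, Complex.real_smul]
  have hRC : NormedSpace.exp ((t : ℂ) • Ad.map Complex.ofReal)
      = NormedSpace.exp ((t : ℂ) • Ad.map Complex.ofReal) :=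
    rfl
  calc (NormedSpace.exp (t • Ad)).map Complex.ofReal
      = Complex.ofRealHom.mapMatrix (NormedSpace.exp (t • Ad)) := rfl
    _ = NormedSpace.exp (Complex.ofRealHom.mapMatrix (t • Ad)) := h
    _ = NormedSpace.exp ((t : ℂ) • Ad.map Complex.ofReal) := by rw [hmap]
    _ = NormedSpace.exp ((t : ℂ) • Ad.map Complex.ofReal) := hRC

/-- componentwise complexification of `mulVec`. -/
lemma mulVec_map_ofReal (M : Matrix (Fin 4) (Fin 4) ℝ) (v : Fin 4 → ℂ) (i : Fin 4) :
    ((M.map Complex.ofReal).mulVec v) i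
      = (((M.mulVec fun j => (v j).re) i : ℝ) : ℂ)
        + (((M.mulVec fun j => (v j).im) i : ℝ) : ℂ) * Complex.I := by
  simp only [Matrix.mulVec, dotProduct, Matrix.map_apply]
  push_cast
  rw [Finset.sum_mul, ← Finset.sum_add_distrib]
  apply Finset.sum_congr rfl
  intro j _
  conv_lhs => rw [← Complex.re_add_im (v j)]
  ring

/-- There is an initial state `x₀ ∈ ℝ⁴` whose open-loop trajectory
`t ↦ exp (t • Ad) x₀` is unbounded as `t → ∞`:
the damaged aircraft's open-loop response diverges. -/
theorem Ad_open_loop_unbounded :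
    ∃ x₀ : Fin 4 → ℝ,
      ¬ ∃ C : ℝ, ∀ t : ℝ, 0 ≤ t →
        ‖(NormedSpace.exp (t • Ad)).mulVec x₀‖ ≤ C := by
  by_contra hcon
  push_neg at hcon
  obtain ⟨l, hlre, v, hv, heig⟩ := Ad_eig
  obtain ⟨CR, hCR⟩ := hcon fun i => (v i).re
  obtain ⟨CI, hCI⟩ := hcon fun i => (v i).im
  have h0R : (0 : ℝ) ≤ CR := le_trans (norm_nonneg _) (hCR 0 le_rfl)
  have h0I : (0 : ℝ) ≤ CI := le_trans (norm_nonneg _) (hCI 0 le_rfl)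
  have traj : ∀ t : ℝ,
      ((NormedSpace.exp (t • Ad)).map Complex.ofReal).mulVec v
        = Complex.exp ((t : ℂ) * l) • v := by
    intro t
    rw [exp_map_ofReal t]
    apply exp_mulVec_eigen
    rw [Matrix.smul_mulVec, heig, smul_smul]
  have hb : ∀ t : ℝ, 0 ≤ t → Real.exp (t * l.re) * ‖v‖ ≤ CR + CI := by
    intro t ht
    have h1 : ‖Complex.exp ((t : ℂ) * l) • v‖ = Real.exp (t * l.re) * ‖v‖ := by
      rw [norm_smul, Complex.norm_exp]
      congr 2
      simp [Complex.mul_re]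
    rw [← h1, ← traj t]
    rw [pi_norm_le_iff_of_nonneg (by linarith)]
    intro i
    rw [mulVec_map_ofReal]
    calc ‖_ + _‖
        ≤ ‖((((NormedSpace.exp (t • Ad)).mulVec fun j => (v j).re) i : ℝ) : ℂ)‖
          + ‖((((NormedSpace.exp (t • Ad)).mulVec fun j => (v j).im) i : ℝ) : ℂ) * Complex.I‖ :=
          norm_add_le _ _
      _ ≤ CR + CI := by
          rw [norm_mul, Complex.norm_I, mul_one, Complex.norm_real, Complex.norm_real]
          gcongr
          · exact le_trans (norm_le_pi_norm _ i) (hCR t ht)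
          · exact le_trans (norm_le_pi_norm _ i) (hCI t ht)
  have hvn : 0 < ‖v‖ := norm_pos_iff.mpr hv
  set K : ℝ := CR + CI with hK
  set t₀ : ℝ := max 0 (K / (l.re * ‖v‖)) with ht₀def
  have ht₀ : 0 ≤ t₀ := le_max_left _ _
  have hbt := hb t₀ ht₀
  have hexp : t₀ * l.re + 1 ≤ Real.exp (t₀ * l.re) := Real.add_one_le_exp _
  have hKle : K ≤ t₀ * (l.re * ‖v‖) := by
    have h1 : K / (l.re * ‖v‖) ≤ t₀ := le_max_right _ _
    have h2 : 0 < l.re * ‖v‖ := mul_pos hlre hvn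
    calc K = K / (l.re * ‖v‖) * (l.re * ‖v‖) := by field_simp
      _ ≤ t₀ * (l.re * ‖v‖) := by gcongr
  nlinarith [hvn, hexp, hbt]
end

section
/- The 4×4 matrix [B_d | A_d·B_d], obtained by concatenating the columns of B_d and of A_d·B_d, has rank 4; consequently the Kalman controllability matrix [B_d, A_d B_d, A_d² B_d, A_d³ B_d] has full rank 4, i.e., the damaged-aircraft pair (A_d, B_d) is controllable with aileron and differential-thrust inputs. -/
open Matrix

/-- The damaged-aircraft input matrix (aileron deflection and differential thrust). -/
def Bd : Matrix (Fin 4) (Fin 2) ℝ :=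
  !![0, 0;
     0.2249, 0.0142;
     0, 0;
     0.0118, 0.6784]

lemma rank_submatrix_equiv {m n : Type*} [Fintype m] [Fintype n] [DecidableEq m] [DecidableEq n]
    {k : Type*} [Fintype k] (M : Matrix k m ℝ) (e : m ≃ n) :
    (M.submatrix id (e.symm : n → m)).rank = M.rank := by
  refine le_antisymm ?_ ?_
  · have h1 := rank_mul_le_left M ((1 : Matrix m m ℝ).submatrix (Equiv.refl m) (e.symm : n → m))
    rw [mul_submatrix_one] at h1
    simpa using h1
  · have h2 := rank_mul_le_left (M.submatrix id (e.symm : n → m))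
      ((1 : Matrix n n ℝ).submatrix (Equiv.refl n) (e : m → n))
    rw [mul_submatrix_one] at h2
    simpa [submatrix_submatrix, Function.comp] using h2

lemma sq_eq : ((fromCols Bd (Ad * Bd)).submatrix id
      ((finSumFinEquiv (m := 2) (n := 2)).symm : Fin 4 → Fin 2 ⊕ Fin 2))
    = !![0, 0, 0.2249, 0.0142;
         0.2249, 0.0142, -0.1914599, 0.0562190;
         0, 0, -0.0118, -0.6784;
         0.0118, 0.6784, -0.00557752, -0.00035216] := by
  ext i j
  fin_cases i <;> fin_cases j <;>
    norm_num [Ad, Bd, fromCols, Matrix.mul_apply, Fin.sum_univ_four, finSumFinEquiv,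
      Fin.addCases, Fin.castLT, Fin.subNat]

lemma rank_sq : (fromCols Bd (Ad * Bd)).rank = 4 := by
  have h := rank_submatrix_equiv (fromCols Bd (Ad * Bd)) (finSumFinEquiv (m := 2) (n := 2))
  rw [← h, sq_eq]
  have hdet : (!![0, 0, 0.2249, 0.0142;
         0.2249, 0.0142, -0.1914599, 0.0562190;
         0, 0, -0.0118, -0.6784;
         0.0118, 0.6784, -0.00557752, -0.00035216] : Matrix (Fin 4) (Fin 4) ℝ).det ≠ 0 := by
    norm_num [Matrix.det_succ_row_zero, Fin.sum_univ_succ]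
    norm_num [show Fin.succAbove (2:Fin 4) (2:Fin 3) = 3 from rfl,
              show Fin.castSucc (2:Fin 3) = (2:Fin 4) from rfl]
    simp only [Matrix.cons_val]
    norm_num
  have := Matrix.rank_of_isUnit _ ((Matrix.isUnit_iff_isUnit_det _).mpr hdet.isUnit)
  simpa using this

/-- The 4×4 matrix `[Bd | Ad·Bd]` has rank 4; consequently the Kalman controllability
matrix `[Bd, Ad·Bd, Ad²·Bd, Ad³·Bd]` has full rank 4, i.e. the damaged-aircraft pair
`(Ad, Bd)` is controllable with aileron and differential-thrust inputs. -/
theorem Ad_Bd_controllable :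
    (fromCols Bd (Ad * Bd)).rank = 4 ∧
    (fromCols (fromCols Bd (Ad * Bd))
      (fromCols (Ad ^ 2 * Bd) (Ad ^ 3 * Bd))).rank = 4 := by
  refine ⟨rank_sq, le_antisymm ?_ ?_⟩
  · simpa using (fromCols (fromCols Bd (Ad * Bd))
      (fromCols (Ad ^ 2 * Bd) (Ad ^ 3 * Bd))).rank_le_card_height
  · have hmul : fromCols (fromCols Bd (Ad * Bd))
        (fromCols (Ad ^ 2 * Bd) (Ad ^ 3 * Bd)) *
        fromRows (1 : Matrix ((Fin 2) ⊕ (Fin 2)) ((Fin 2) ⊕ (Fin 2)) ℝ)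
          (0 : Matrix ((Fin 2) ⊕ (Fin 2)) ((Fin 2) ⊕ (Fin 2)) ℝ)
        = fromCols Bd (Ad * Bd) := by
      rw [fromCols_mul_fromRows]
      simp
    refine le_trans (le_of_eq rank_sq.symm) ?_
    exact le_trans (le_of_eq (congrArg Matrix.rank hmul.symm)) (rank_mul_le_left _ _)
end
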